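/- arXiv:1304.2444 — 3 statements merged into one kernel-verified Lean document; each statement's English description precedes it below -/
import Mathlib

section
/- For a two-round interactive communication, i.e., F = (F₁, F₂) where F₁ = f₁(X) and F₂ = f₂(Y, F₁) for deterministic functions f₁, f₂ and independent-mechanism-free random variables X, Y, it holds that H(F | X) + H(F | Y) ≤ H(F). -/
open scoped Classical
open Finset Real

noncomputable section

variable {Ω : Type*} [Fintype Ω]

/-- Pushforward probability of value `x` under random variable `X` w.r.t. pmf `p`. -/
def dist' {α : Type*} (p : Ω → ℝ) (X : Ω → α) (x : α) : ℝ :=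
  ∑ ω, if X ω = x then p ω else 0

/-- Shannon entropy, base 2. -/
def ent {α : Type*} [Fintype α] (p : Ω → ℝ) (X : Ω → α) : ℝ :=
  -∑ x, dist' p X x * Real.logb 2 (dist' p X x)

/-- Conditional entropy `H(X | Y)`. -/
def condEnt {α β : Type*} [Fintype α] [Fintype β] (p : Ω → ℝ) (X : Ω → α) (Y : Ω → β) : ℝ :=
  ent p (fun ω => (X ω, Y ω)) - ent p Y

/-- Mutual information `I(X ∧ Y)`. -/
def mi {α β : Type*} [Fintype α] [Fintype β] (p : Ω → ℝ) (X : Ω → α) (Y : Ω → β) : ℝ :=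
  ent p X + ent p Y - ent p (fun ω => (X ω, Y ω))

/-- Conditional mutual information `I(X ∧ Y | Z)`. -/
def cmi {α β γ : Type*} [Fintype α] [Fintype β] [Fintype γ]
    (p : Ω → ℝ) (X : Ω → α) (Y : Ω → β) (Z : Ω → γ) : ℝ :=
  ent p (fun ω => (X ω, Z ω)) + ent p (fun ω => (Y ω, Z ω))
    - ent p (fun ω => ((X ω, Y ω), Z ω)) - ent p Z

/-- `p` is a probability mass function on `Ω`. -/
def IsPMF (p : Ω → ℝ) : Prop := (∀ ω, 0 ≤ p ω) ∧ ∑ ω, p ω = 1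

lemma dist'_nonneg {α : Type*} (p : Ω → ℝ) (hp : ∀ ω, 0 ≤ p ω) (X : Ω → α) (x : α) :
    0 ≤ dist' p X x :=
  Finset.sum_nonneg fun ω _ => by split_ifs; exacts [hp ω, le_rfl]

lemma sum_dist' {α : Type*} [Fintype α] (p : Ω → ℝ) (X : Ω → α) :
    ∑ x, dist' p X x = ∑ ω, p ω := by
  unfold dist'
  rw [Finset.sum_comm]
  exact Finset.sum_congr rfl fun ω _ => by simp

lemma dist'_comp {α β : Type*} [Fintype α] (p : Ω → ℝ) (T : Ω → α) (s : α → β) (b : β) :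
    dist' p (fun ω => s (T ω)) b = ∑ a, if s a = b then dist' p T a else 0 := by
  unfold dist'
  rw [eq_comm]
  have h1 : ∀ a, (if s a = b then ∑ ω, (if T ω = a then p ω else 0) else 0)
      = ∑ ω, if s a = b then (if T ω = a then p ω else 0) else 0 := by
    intro a; split_ifs with h
    · rfl
    · simp
  rw [Finset.sum_congr rfl fun a _ => h1 a, Finset.sum_comm]
  refine Finset.sum_congr rfl fun ω _ => ?_
  have h2 : ∀ a, (if s a = b then (if T ω = a then p ω else 0) else 0)
      = if T ω = a then (if s a = b then p ω else 0) else 0 := by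
    intro a; split_ifs <;> rfl
  rw [Finset.sum_congr rfl fun a _ => h2 a]
  simp

lemma ent_comp_expand {α β : Type*} [Fintype α] [Fintype β] (p : Ω → ℝ) (T : Ω → α) (s : α → β) :
    ent p (fun ω => s (T ω))
      = -∑ a, dist' p T a * Real.logb 2 (dist' p (fun ω => s (T ω)) (s a)) := by
  unfold ent
  congr 1
  calc ∑ b, dist' p (fun ω => s (T ω)) b * Real.logb 2 (dist' p (fun ω => s (T ω)) b)
      = ∑ b, ∑ a, (if s a = b then dist' p T a else 0)
          * Real.logb 2 (dist' p (fun ω => s (T ω)) b) := by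
        refine Finset.sum_congr rfl fun b _ => ?_
        rw [dist'_comp, Finset.sum_mul]
    _ = ∑ a, ∑ b, if s a = b then dist' p T a * Real.logb 2 (dist' p (fun ω => s (T ω)) b) else 0 := by
        rw [Finset.sum_comm]
        exact Finset.sum_congr rfl fun a _ => Finset.sum_congr rfl fun b _ => by
          split_ifs <;> simp
    _ = ∑ a, dist' p T a * Real.logb 2 (dist' p (fun ω => s (T ω)) (s a)) := by
        refine Finset.sum_congr rfl fun a _ => ?_
        simp

lemma dist'_comp_ge {α β : Type*} [Fintype α] (p : Ω → ℝ) (hp : ∀ ω, 0 ≤ p ω)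
    (T : Ω → α) (s : α → β) (a : α) :
    dist' p T a ≤ dist' p (fun ω => s (T ω)) (s a) := by
  conv_rhs => rw [dist'_comp]
  have h := Finset.single_le_sum (f := fun a' => if s a' = s a then dist' p T a' else 0)
    (fun i _ => by beta_reduce; split_ifs; exacts [dist'_nonneg p hp T i, le_rfl])
    (Finset.mem_univ a)
  simpa using h

lemma ent_comp_inj {α β : Type*} [Fintype α] [Fintype β] (p : Ω → ℝ) (X : Ω → α)
    (g : α → β) (hg : Function.Injective g) :
    ent p (fun ω => g (X ω)) = ent p X := by
  have hd : ∀ a, dist' p (fun ω => g (X ω)) (g a) = dist' p X a := by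
    intro a; unfold dist'; exact Finset.sum_congr rfl fun ω _ => by simp [hg.eq_iff]
  have hz : ∀ b ∈ Finset.univ, b ∉ Finset.univ.image g →
      dist' p (fun ω => g (X ω)) b * Real.logb 2 (dist' p (fun ω => g (X ω)) b) = 0 := by
    intro b _ hb
    have : dist' p (fun ω => g (X ω)) b = 0 := by
      refine Finset.sum_eq_zero fun ω _ => ?_
      rw [if_neg]
      intro h; exact hb (Finset.mem_image.mpr ⟨X ω, Finset.mem_univ _, h⟩)
    rw [this]; ring
  unfold ent
  congr 1
  rw [← Finset.sum_subset (Finset.subset_univ (Finset.univ.image g)) hz,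
      Finset.sum_image (fun a _ a' _ h => hg h)]
  exact Finset.sum_congr rfl fun a _ => by rw [hd]

lemma marg_fst_sum {α γ : Type*} [Fintype α] [Fintype γ] (p : Ω → ℝ) (X : Ω → α) (Z : Ω → γ)
    (c : γ) : ∑ a, dist' p (fun ω => (X ω, Z ω)) (a, c) = dist' p Z c := by
  have h := dist'_comp p (fun ω => (X ω, Z ω)) Prod.snd c
  simpa [Fintype.sum_prod_type] using h.symm

lemma per_term {d x y z : ℝ} (hx0 : 0 ≤ x) (hy0 : 0 ≤ y) (hz0 : 0 ≤ z)
    (hd : 0 ≤ d) (hx : d ≤ x) (hy : d ≤ y) (hz : d ≤ z) :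
    (d - x * y / z) / Real.log 2
      ≤ d * (Real.logb 2 d + Real.logb 2 z - Real.logb 2 x - Real.logb 2 y) := by
  have h2 : 0 < Real.log 2 := Real.log_pos one_lt_two
  rcases eq_or_lt_of_le hd with h | h
  · rw [← h, zero_mul, zero_sub]
    apply div_nonpos_of_nonpos_of_nonneg _ h2.le
    simp only [neg_nonpos]
    positivity
  · have hx' : 0 < x := lt_of_lt_of_le h hx
    have hy' : 0 < y := lt_of_lt_of_le h hy
    have hz' : 0 < z := lt_of_lt_of_le h hz
    have key : Real.log (x * y / (z * d)) ≤ x * y / (z * d) - 1 :=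
      Real.log_le_sub_one_of_pos (by positivity)
    have hlog : Real.log (x * y / (z * d))
        = Real.log x + Real.log y - (Real.log z + Real.log d) := by
      rw [Real.log_div (by positivity) (by positivity), Real.log_mul hx'.ne' hy'.ne',
        Real.log_mul hz'.ne' h.ne']
    have h1 : d * Real.log (x * y / (z * d)) ≤ d * (x * y / (z * d) - 1) :=
      mul_le_mul_of_nonneg_left key hd
    have h2' : d * (x * y / (z * d) - 1) = x * y / z - d := by
      field_simp
    rw [hlog] at h1
    have main : d - x * y / z ≤ d * (Real.log d + Real.log z - Real.log x - Real.log y) := by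
      nlinarith [h1, h2']
    calc (d - x * y / z) / Real.log 2
        ≤ d * (Real.log d + Real.log z - Real.log x - Real.log y) / Real.log 2 := by
          gcongr
      _ = d * (Real.logb 2 d + Real.logb 2 z - Real.logb 2 x - Real.logb 2 y) := by
          simp only [Real.logb]; ring

lemma cmi_nonneg {α β γ : Type*} [Fintype α] [Fintype β] [Fintype γ]
    (p : Ω → ℝ) (hp : IsPMF p) (X : Ω → α) (Y : Ω → β) (Z : Ω → γ) :
    0 ≤ ent p (fun ω => (X ω, Z ω)) + ent p (fun ω => (Y ω, Z ω))
      - ent p (fun ω => ((X ω, Y ω), Z ω)) - ent p Z := by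
  obtain ⟨hp0, hp1⟩ := hp
  set T : Ω → (α × β) × γ := fun ω => ((X ω, Y ω), Z ω) with hT
  set d3 : (α × β) × γ → ℝ := dist' p T with hd3
  set dXZ : α × γ → ℝ := dist' p (fun ω => (X ω, Z ω)) with hdXZ
  set dYZ : β × γ → ℝ := dist' p (fun ω => (Y ω, Z ω)) with hdYZ
  set dZ : γ → ℝ := dist' p Z with hdZ
  have e1 : ent p (fun ω => (X ω, Z ω))
      = -∑ t : (α × β) × γ, d3 t * Real.logb 2 (dXZ (t.1.1, t.2)) :=
    ent_comp_expand p T (fun t => (t.1.1, t.2))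
  have e2 : ent p (fun ω => (Y ω, Z ω))
      = -∑ t : (α × β) × γ, d3 t * Real.logb 2 (dYZ (t.1.2, t.2)) :=
    ent_comp_expand p T (fun t => (t.1.2, t.2))
  have e3 : ent p (fun ω => ((X ω, Y ω), Z ω))
      = -∑ t : (α × β) × γ, d3 t * Real.logb 2 (d3 t) := rfl
  have e4 : ent p Z = -∑ t : (α × β) × γ, d3 t * Real.logb 2 (dZ t.2) :=
    ent_comp_expand p T (fun t => t.2)
  -- marginal sums
  have hS1 : ∑ t : (α × β) × γ, d3 t = 1 := by rw [hd3, sum_dist', hp1]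
  have hmargX : ∀ c, ∑ a, dXZ (a, c) = dZ c := fun c => marg_fst_sum p X Z c
  have hmargY : ∀ c, ∑ b, dYZ (b, c) = dZ c := fun c => marg_fst_sum p Y Z c
  have hq : ∀ c : γ, ∑ a, ∑ b, dXZ (a, c) * dYZ (b, c) / dZ c = dZ c := by
    intro c
    have step : ∑ a, ∑ b, dXZ (a, c) * dYZ (b, c) / dZ c
        = (∑ a, dXZ (a, c)) * (∑ b, dYZ (b, c)) / dZ c := by
      rw [Finset.sum_mul, Finset.sum_div]
      refine Finset.sum_congr rfl fun a _ => ?_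
      rw [Finset.mul_sum, Finset.sum_div]
    rw [step, hmargX, hmargY]
    by_cases h : dZ c = 0
    · simp [h]
    · field_simp
  have hS2 : ∑ t : (α × β) × γ, dXZ (t.1.1, t.2) * dYZ (t.1.2, t.2) / dZ t.2 = 1 := by
    have expand : ∑ t : (α × β) × γ, dXZ (t.1.1, t.2) * dYZ (t.1.2, t.2) / dZ t.2
        = ∑ a, ∑ b, ∑ c, dXZ (a, c) * dYZ (b, c) / dZ c := by
      simp [Fintype.sum_prod_type]
    rw [expand]
    calc ∑ a, ∑ b, ∑ c, dXZ (a, c) * dYZ (b, c) / dZ c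
        = ∑ a, ∑ c, ∑ b, dXZ (a, c) * dYZ (b, c) / dZ c :=
          Finset.sum_congr rfl fun a _ => Finset.sum_comm
      _ = ∑ c, ∑ a, ∑ b, dXZ (a, c) * dYZ (b, c) / dZ c := Finset.sum_comm
      _ = ∑ c, dZ c := Finset.sum_congr rfl fun c _ => hq c
      _ = 1 := by rw [hdZ, sum_dist', hp1]
  -- per-term inequality
  have hL : ∀ t : (α × β) × γ,
      (d3 t - dXZ (t.1.1, t.2) * dYZ (t.1.2, t.2) / dZ t.2) / Real.log 2
        ≤ d3 t * (Real.logb 2 (d3 t) + Real.logb 2 (dZ t.2)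
            - Real.logb 2 (dXZ (t.1.1, t.2)) - Real.logb 2 (dYZ (t.1.2, t.2))) := by
    intro t
    exact per_term (dist'_nonneg p hp0 _ _) (dist'_nonneg p hp0 _ _) (dist'_nonneg p hp0 _ _)
      (dist'_nonneg p hp0 _ _)
      (dist'_comp_ge p hp0 T (fun t => (t.1.1, t.2)) t)
      (dist'_comp_ge p hp0 T (fun t => (t.1.2, t.2)) t)
      (dist'_comp_ge p hp0 T (fun t => t.2) t)
  rw [e1, e2, e3, e4]
  have hR : -∑ t : (α × β) × γ, d3 t * Real.logb 2 (dXZ (t.1.1, t.2))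
      + -∑ t : (α × β) × γ, d3 t * Real.logb 2 (dYZ (t.1.2, t.2))
      - -∑ t : (α × β) × γ, d3 t * Real.logb 2 (d3 t)
      - -∑ t : (α × β) × γ, d3 t * Real.logb 2 (dZ t.2)
      = ∑ t : (α × β) × γ, d3 t * (Real.logb 2 (d3 t) + Real.logb 2 (dZ t.2)
          - Real.logb 2 (dXZ (t.1.1, t.2)) - Real.logb 2 (dYZ (t.1.2, t.2))) := by
    have expand : ∀ t : (α × β) × γ,
        d3 t * (Real.logb 2 (d3 t) + Real.logb 2 (dZ t.2)
          - Real.logb 2 (dXZ (t.1.1, t.2)) - Real.logb 2 (dYZ (t.1.2, t.2)))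
        = d3 t * Real.logb 2 (d3 t) + d3 t * Real.logb 2 (dZ t.2)
          - d3 t * Real.logb 2 (dXZ (t.1.1, t.2)) - d3 t * Real.logb 2 (dYZ (t.1.2, t.2)) :=
      fun t => by ring
    rw [Finset.sum_congr rfl fun t _ => expand t, Finset.sum_sub_distrib,
      Finset.sum_sub_distrib, Finset.sum_add_distrib]
    ring
  rw [hR]
  calc (0 : ℝ) = ∑ t : (α × β) × γ,
        (d3 t - dXZ (t.1.1, t.2) * dYZ (t.1.2, t.2) / dZ t.2) / Real.log 2 := by
        rw [← Finset.sum_div, Finset.sum_sub_distrib, hS1, hS2]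
        simp
    _ ≤ _ := Finset.sum_le_sum fun t _ => hL t

lemma mi_nonneg {α β : Type*} [Fintype α] [Fintype β]
    (p : Ω → ℝ) (hp : IsPMF p) (X : Ω → α) (Y : Ω → β) :
    0 ≤ ent p X + ent p Y - ent p (fun ω => (X ω, Y ω)) := by
  have h := cmi_nonneg p hp X Y (fun _ => (0 : Fin 1))
  have e1 : ent p (fun ω => (X ω, (0 : Fin 1))) = ent p X :=
    ent_comp_inj p X (fun a => (a, 0)) (fun a b hab => congrArg Prod.fst hab)
  have e2 : ent p (fun ω => (Y ω, (0 : Fin 1))) = ent p Y :=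
    ent_comp_inj p Y (fun a => (a, 0)) (fun a b hab => congrArg Prod.fst hab)
  have e3 : ent p (fun ω => ((X ω, Y ω), (0 : Fin 1))) = ent p (fun ω => (X ω, Y ω)) :=
    ent_comp_inj p (fun ω => (X ω, Y ω)) (fun a => (a, 0)) (fun a b hab => congrArg Prod.fst hab)
  have e4 : ent p (fun _ : Ω => (0 : Fin 1)) = 0 := by
    simp [ent, dist', hp.2]
  rw [e1, e2, e3, e4] at h
  linarith


/-- For a two-round interactive communication `F = (f₁(X), f₂(Y, f₁(X)))`:
`H(F|X) + H(F|Y) ≤ H(F)`. -/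
theorem stmt1 {Ω 𝒳 𝒴 ℱ₁ ℱ₂ : Type*} [Fintype Ω] [Fintype 𝒳] [Fintype 𝒴]
    [Fintype ℱ₁] [Fintype ℱ₂]
    (p : Ω → ℝ) (hp : IsPMF p) (X : Ω → 𝒳) (Y : Ω → 𝒴)
    (f₁ : 𝒳 → ℱ₁) (f₂ : 𝒴 → ℱ₁ → ℱ₂) :
    condEnt p (fun ω => (f₁ (X ω), f₂ (Y ω) (f₁ (X ω)))) X
      + condEnt p (fun ω => (f₁ (X ω), f₂ (Y ω) (f₁ (X ω)))) Y
      ≤ ent p (fun ω => (f₁ (X ω), f₂ (Y ω) (f₁ (X ω)))) := by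
  -- Step A : H(F,X) = H(F₂,X)
  have eA : ent p (fun ω => ((f₁ (X ω), f₂ (Y ω) (f₁ (X ω))), X ω))
      = ent p (fun ω => (f₂ (Y ω) (f₁ (X ω)), X ω)) :=
    ent_comp_inj p (fun ω => (f₂ (Y ω) (f₁ (X ω)), X ω))
      (fun t => ((f₁ t.2, t.1), t.2))
      (fun a b h => by
        simp only [Prod.ext_iff] at h
        exact Prod.ext h.1.2 h.2)
  -- Step B : cmi(F₂ ; X | F₁) ≥ 0 with function identifications
  have hB := cmi_nonneg p hp (fun ω => f₂ (Y ω) (f₁ (X ω))) X (fun ω => f₁ (X ω))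
  have eB1 : ent p (fun ω => (X ω, f₁ (X ω))) = ent p X :=
    ent_comp_inj p X (fun x => (x, f₁ x)) (fun a b h => congrArg Prod.fst h)
  have eB2 : ent p (fun ω => ((f₂ (Y ω) (f₁ (X ω)), X ω), f₁ (X ω)))
      = ent p (fun ω => (f₂ (Y ω) (f₁ (X ω)), X ω)) :=
    ent_comp_inj p (fun ω => (f₂ (Y ω) (f₁ (X ω)), X ω))
      (fun t => (t, f₁ t.2)) (fun a b h => congrArg Prod.fst h)
  rw [eB1, eB2] at hB
  -- Step C : H(F,Y) = H(F₁,Y) and mi(F₁ ; Y) ≥ 0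
  have eC : ent p (fun ω => ((f₁ (X ω), f₂ (Y ω) (f₁ (X ω))), Y ω))
      = ent p (fun ω => (f₁ (X ω), Y ω)) :=
    ent_comp_inj p (fun ω => (f₁ (X ω), Y ω))
      (fun t => ((t.1, f₂ t.2 t.1), t.2))
      (fun a b h => by
        simp only [Prod.ext_iff] at h
        exact Prod.ext h.1.1 h.2)
  have hC := mi_nonneg p hp (fun ω => f₁ (X ω)) Y
  -- Step D : H(F₂,F₁) = H(F)
  have eD : ent p (fun ω => (f₂ (Y ω) (f₁ (X ω)), f₁ (X ω)))
      = ent p (fun ω => (f₁ (X ω), f₂ (Y ω) (f₁ (X ω)))) :=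
    ent_comp_inj p (fun ω => (f₁ (X ω), f₂ (Y ω) (f₁ (X ω)))) Prod.swap Prod.swap_injective
  rw [eD] at hB
  unfold condEnt
  rw [eA, eC]
  linarith
end
end

section
/- Let g₁(X) and g₂(Y) be sufficient statistics, i.e., X → g₁(X) → Y and X → g₂(Y) → Y hold. If a random variable U satisfies H(U | X) = 0 and H(U | Y) = 0, then H(U | g₁(X)) = 0 and H(U | g₂(Y)) = 0. -/
open scoped Classical
open Finset Real

noncomputable section

variable {Ω : Type*} [Fintype Ω]

namespace Aux7

lemma dist'_nonneg {α : Type*} {p : Ω → ℝ} (hp : ∀ ω, 0 ≤ p ω) (X : Ω → α) (x : α) :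
    0 ≤ dist' p X x :=
  Finset.sum_nonneg fun ω _ => by split <;> [exact hp ω; rfl]

lemma le_dist' {α : Type*} {p : Ω → ℝ} (hp : ∀ ω, 0 ≤ p ω) (X : Ω → α) (ω : Ω) :
    p ω ≤ dist' p X (X ω) := by
  have h := Finset.single_le_sum (f := fun ω' => if X ω' = X ω then p ω' else 0)
    (fun ω' _ => by split <;> [exact hp ω'; rfl]) (Finset.mem_univ ω)
  simpa [dist'] using h

lemma exists_of_dist'_pos {α : Type*} {p : Ω → ℝ} (hp : ∀ ω, 0 ≤ p ω) {X : Ω → α} {x : α}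
    (h : 0 < dist' p X x) : ∃ ω, 0 < p ω ∧ X ω = x := by
  by_contra hc
  push_neg at hc
  have h0 : dist' p X x = 0 := Finset.sum_eq_zero fun ω _ => by
    by_cases hx : X ω = x
    · have := hc ω
      have hpω : p ω = 0 := le_antisymm (by by_contra h'; exact (this (lt_of_le_of_ne (hp ω) (fun e => h' e.ge))) hx) (hp ω)
      simp [hx, hpω]
    · simp [hx]
  rw [h0] at h; exact lt_irrefl 0 h

lemma sum_dist' {α : Type*} [Fintype α] (p : Ω → ℝ) (X : Ω → α) :
    ∑ x, dist' p X x = ∑ ω, p ω := by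
  unfold dist'
  rw [Finset.sum_comm]
  exact Finset.sum_congr rfl fun ω _ => by simp [Finset.sum_ite_eq]

variable {𝒳 𝒴 γ : Type*} [Fintype 𝒳] [Fintype 𝒴] [Fintype γ]

lemma marg1 (p : Ω → ℝ) (X : Ω → 𝒳) (Y : Ω → 𝒴) (Z : Ω → γ) (a : 𝒳) (c : γ) :
    dist' p (fun ω => (X ω, Z ω)) (a, c)
      = ∑ b, dist' p (fun ω => ((X ω, Y ω), Z ω)) ((a, b), c) := by
  unfold dist'
  rw [Finset.sum_comm]
  refine Finset.sum_congr rfl fun ω _ => ?_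
  by_cases h1 : X ω = a <;> by_cases h2 : Z ω = c <;>
    simp [Prod.ext_iff, h1, h2, Finset.sum_ite_eq]

lemma marg2 (p : Ω → ℝ) (X : Ω → 𝒳) (Y : Ω → 𝒴) (Z : Ω → γ) (b : 𝒴) (c : γ) :
    dist' p (fun ω => (Y ω, Z ω)) (b, c)
      = ∑ a, dist' p (fun ω => ((X ω, Y ω), Z ω)) ((a, b), c) := by
  unfold dist'
  rw [Finset.sum_comm]
  refine Finset.sum_congr rfl fun ω _ => ?_
  by_cases h1 : Y ω = b <;> by_cases h2 : Z ω = c <;>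
    simp [Prod.ext_iff, h1, h2, Finset.sum_ite_eq]

lemma margUZ (p : Ω → ℝ) (U : Ω → 𝒳) (Z : Ω → γ) (c : γ) :
    dist' p Z c = ∑ u, dist' p (fun ω => (U ω, Z ω)) (u, c) := by
  unfold dist'
  rw [Finset.sum_comm]
  refine Finset.sum_congr rfl fun ω _ => ?_
  by_cases h2 : Z ω = c <;> simp [Prod.ext_iff, h2, Finset.sum_ite_eq]


lemma marg3 (p : Ω → ℝ) (X : Ω → 𝒳) (Y : Ω → 𝒴) (Z : Ω → γ) (c : γ) :
    dist' p Z c = ∑ a, ∑ b, dist' p (fun ω => ((X ω, Y ω), Z ω)) ((a, b), c) := by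
  rw [margUZ p (fun ω => (X ω, Y ω)) Z c, Fintype.sum_prod_type]


lemma condEnt_eq_zero_iff {𝒰 : Type*} [Fintype 𝒰]
    (p : Ω → ℝ) (hp : IsPMF p) (U : Ω → 𝒰) (Z : Ω → γ) :
    condEnt p U Z = 0 ↔ ∀ ω ω', 0 < p ω → 0 < p ω' → Z ω = Z ω' → U ω = U ω' := by
  obtain ⟨hp0, _hp1⟩ := hp
  set r : 𝒰 → γ → ℝ := fun u c => dist' p (fun ω => (U ω, Z ω)) (u, c) with hr
  set q : γ → ℝ := fun c => dist' p Z c with hq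
  have hm : ∀ c, q c = ∑ u, r u c := fun c => margUZ p U Z c
  have hrn : ∀ u c, 0 ≤ r u c := fun u c => dist'_nonneg hp0 _ _
  have hrq : ∀ u c, r u c ≤ q c := by
    intro u c; rw [hm c]
    exact Finset.single_le_sum (fun u' _ => hrn u' c) (Finset.mem_univ u)
  have hce : condEnt p U Z
      = ∑ u, ∑ c, r u c * (Real.logb 2 (q c) - Real.logb 2 (r u c)) := by
    rw [condEnt, ent, ent, Fintype.sum_prod_type]
    have h2 : ∑ c, q c * Real.logb 2 (q c) = ∑ u, ∑ c, r u c * Real.logb 2 (q c) := by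
      rw [Finset.sum_comm]
      exact Finset.sum_congr rfl fun c _ => by rw [hm c, Finset.sum_mul]
    simp only [mul_sub, Finset.sum_sub_distrib]
    rw [← h2]; ring
  have hterm : ∀ u c, 0 ≤ r u c * (Real.logb 2 (q c) - Real.logb 2 (r u c)) := by
    intro u c
    rcases eq_or_lt_of_le (hrn u c) with h | h
    · rw [← h]; simp
    · have hlog : Real.logb 2 (r u c) ≤ Real.logb 2 (q c) :=
        Real.logb_le_logb_of_le (by norm_num) h (hrq u c)
      have := sub_nonneg.2 hlog
      positivity
  constructor
  · intro h ω ω' hω hω' hzz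
    have hz : ∀ u c, r u c * (Real.logb 2 (q c) - Real.logb 2 (r u c)) = 0 := by
      have houter := (Finset.sum_eq_zero_iff_of_nonneg
        (fun u _ => Finset.sum_nonneg fun c _ => hterm u c)).1 (hce ▸ h)
      intro u c
      exact (Finset.sum_eq_zero_iff_of_nonneg (fun c _ => hterm u c)).1
        (houter u (Finset.mem_univ u)) c (Finset.mem_univ c)
    have key : ∀ u c, 0 < r u c → r u c = q c := by
      intro u c hpos
      rcases mul_eq_zero.1 (hz u c) with h0 | h0
      · exact absurd h0 hpos.ne'
      · have hql : Real.logb 2 (r u c) = Real.logb 2 (q c) := by linarith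
        exact Real.logb_injOn_pos (b := 2) (by norm_num)
          (Set.mem_Ioi.2 hpos) (Set.mem_Ioi.2 (lt_of_lt_of_le hpos (hrq u c))) hql
    by_contra hne
    have hru : 0 < r (U ω) (Z ω) := lt_of_lt_of_le hω (le_dist' hp0 (fun ω => (U ω, Z ω)) ω)
    have hru' : 0 < r (U ω') (Z ω) := by
      rw [hzz]
      exact lt_of_lt_of_le hω' (le_dist' hp0 (fun ω => (U ω, Z ω)) ω')
    have e1 := key _ _ hru
    have e2 := key _ _ hru'
    have hsum : r (U ω) (Z ω) + r (U ω') (Z ω) ≤ q (Z ω) := by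
      rw [hm (Z ω)]
      have := Finset.sum_le_sum_of_subset_of_nonneg
        (Finset.subset_univ {U ω, U ω'}) (fun u _ _ => hrn u (Z ω))
      rwa [Finset.sum_pair hne] at this
    have : 0 < q (Z ω) := lt_of_lt_of_le hru (hrq _ _)
    linarith
  · intro hfun
    rw [hce]
    refine Finset.sum_eq_zero fun u _ => Finset.sum_eq_zero fun c _ => ?_
    rcases eq_or_lt_of_le (hrn u c) with h | h
    · rw [← h]; simp
    · obtain ⟨ω0, hω0, he⟩ := exists_of_dist'_pos hp0 h
      have he1 : U ω0 = u := congrArg Prod.fst he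
      have he2 : Z ω0 = c := congrArg Prod.snd he
      have hrqe : r u c = q c := by
        rw [hr, hq]
        show dist' p (fun ω => (U ω, Z ω)) (u, c) = dist' p Z c
        unfold dist'
        refine Finset.sum_congr rfl fun ω _ => ?_
        rcases eq_or_lt_of_le (hp0 ω) with hpω | hpω
        · split <;> split <;> simp [← hpω]
        · by_cases hzc : Z ω = c
          · have : U ω = u := he1 ▸ hfun ω ω0 hpω hω0 (by rw [hzc, he2])
            simp [Prod.ext_iff, hzc, this]
          · simp [Prod.ext_iff, hzc]
      rw [hrqe]; simp


lemma cmi_zero_support (p : Ω → ℝ) (hp : IsPMF p) (X : Ω → 𝒳) (Y : Ω → 𝒴) (Z : Ω → γ)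
    (h : cmi p X Y Z = 0) {x : 𝒳} {y : 𝒴} {z : γ}
    (h1 : 0 < dist' p (fun ω => (X ω, Z ω)) (x, z))
    (h2 : 0 < dist' p (fun ω => (Y ω, Z ω)) (y, z)) :
    0 < dist' p (fun ω => ((X ω, Y ω), Z ω)) ((x, y), z) := by
  obtain ⟨hp0, hp1⟩ := hp
  set q : 𝒳 → 𝒴 → γ → ℝ := fun a b c => dist' p (fun ω => ((X ω, Y ω), Z ω)) ((a,b),c) with hqd
  set q1 : 𝒳 → γ → ℝ := fun a c => dist' p (fun ω => (X ω, Z ω)) (a,c) with hq1d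
  set q2 : 𝒴 → γ → ℝ := fun b c => dist' p (fun ω => (Y ω, Z ω)) (b,c) with hq2d
  set q3 : γ → ℝ := fun c => dist' p Z c with hq3d
  have hm1 : ∀ a c, q1 a c = ∑ b, q a b c := fun a c => marg1 p X Y Z a c
  have hm2 : ∀ b c, q2 b c = ∑ a, q a b c := fun b c => marg2 p X Y Z b c
  have hm3 : ∀ c, q3 c = ∑ a, ∑ b, q a b c := fun c => marg3 p X Y Z c
  have hqn : ∀ a b c, 0 ≤ q a b c := fun a b c => dist'_nonneg hp0 _ _
  have hq1n : ∀ a c, 0 ≤ q1 a c := fun a c => dist'_nonneg hp0 _ _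
  have hq2n : ∀ b c, 0 ≤ q2 b c := fun b c => dist'_nonneg hp0 _ _
  have hq3n : ∀ c, 0 ≤ q3 c := fun c => dist'_nonneg hp0 _ _
  have hqq1 : ∀ a b c, q a b c ≤ q1 a c := fun a b c => by
    rw [hm1]; exact Finset.single_le_sum (fun b' _ => hqn a b' c) (Finset.mem_univ b)
  have hqq2 : ∀ a b c, q a b c ≤ q2 b c := fun a b c => by
    rw [hm2]; exact Finset.single_le_sum (fun a' _ => hqn a' b c) (Finset.mem_univ a)
  have hq1q3 : ∀ a c, q1 a c ≤ q3 c := fun a c => by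
    rw [hm3, hm1]
    exact Finset.single_le_sum (fun a' _ => Finset.sum_nonneg fun b _ => hqn a' b c)
      (Finset.mem_univ a)
  have hs1 : ∀ c, ∑ a, q1 a c = q3 c := fun c => by
    rw [hm3]; exact Finset.sum_congr rfl fun a _ => hm1 a c
  have hs2 : ∀ c, ∑ b, q2 b c = q3 c := fun c => by
    rw [hm3, Finset.sum_comm]; exact Finset.sum_congr rfl fun b _ => hm2 b c
  -- rewrite cmi as a triple sum
  have E1 : ∑ t : 𝒳 × γ, dist' p (fun ω => (X ω, Z ω)) t
        * Real.logb 2 (dist' p (fun ω => (X ω, Z ω)) t)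
      = ∑ a, ∑ b, ∑ c, q a b c * Real.logb 2 (q1 a c) := by
    rw [Fintype.sum_prod_type]
    refine Finset.sum_congr rfl fun a _ => ?_
    rw [show (∑ b, ∑ c, q a b c * Real.logb 2 (q1 a c))
        = ∑ c, ∑ b, q a b c * Real.logb 2 (q1 a c) from Finset.sum_comm]
    refine Finset.sum_congr rfl fun c _ => ?_
    rw [← Finset.sum_mul, ← hm1 a c]
  have E2 : ∑ t : 𝒴 × γ, dist' p (fun ω => (Y ω, Z ω)) t
        * Real.logb 2 (dist' p (fun ω => (Y ω, Z ω)) t)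
      = ∑ a, ∑ b, ∑ c, q a b c * Real.logb 2 (q2 b c) := by
    rw [Fintype.sum_prod_type]
    rw [show (∑ a, ∑ b, ∑ c, q a b c * Real.logb 2 (q2 b c))
        = ∑ b, ∑ a, ∑ c, q a b c * Real.logb 2 (q2 b c) from Finset.sum_comm]
    refine Finset.sum_congr rfl fun b _ => ?_
    rw [show (∑ a, ∑ c, q a b c * Real.logb 2 (q2 b c))
        = ∑ c, ∑ a, q a b c * Real.logb 2 (q2 b c) from Finset.sum_comm]
    refine Finset.sum_congr rfl fun c _ => ?_
    rw [← Finset.sum_mul, ← hm2 b c]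
  have E0 : ∑ t : (𝒳 × 𝒴) × γ, dist' p (fun ω => ((X ω, Y ω), Z ω)) t
        * Real.logb 2 (dist' p (fun ω => ((X ω, Y ω), Z ω)) t)
      = ∑ a, ∑ b, ∑ c, q a b c * Real.logb 2 (q a b c) := by
    rw [Fintype.sum_prod_type, Fintype.sum_prod_type]
  have E3 : ∑ c, dist' p Z c * Real.logb 2 (dist' p Z c)
      = ∑ a, ∑ b, ∑ c, q a b c * Real.logb 2 (q3 c) := by
    rw [show (∑ a, ∑ b, ∑ c, q a b c * Real.logb 2 (q3 c))
        = ∑ c, ∑ a, ∑ b, q a b c * Real.logb 2 (q3 c) by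
          rw [show (∑ a, ∑ b, ∑ c, q a b c * Real.logb 2 (q3 c))
              = ∑ a, ∑ c, ∑ b, q a b c * Real.logb 2 (q3 c) from
            Finset.sum_congr rfl fun a _ => Finset.sum_comm]
          exact Finset.sum_comm]
    refine Finset.sum_congr rfl fun c _ => ?_
    rw [show (∑ a, ∑ b, q a b c * Real.logb 2 (q3 c))
        = (∑ a, ∑ b, q a b c) * Real.logb 2 (q3 c) by
          rw [Finset.sum_mul]
          exact Finset.sum_congr rfl fun a _ => (Finset.sum_mul ..).symm]
    rw [← hm3 c]
  have key : cmi p X Y Z = ∑ a, ∑ b, ∑ c, q a b c *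
      (Real.logb 2 (q a b c) + Real.logb 2 (q3 c)
        - Real.logb 2 (q1 a c) - Real.logb 2 (q2 b c)) := by
    rw [cmi, ent, ent, ent, ent, E1, E2, E0, E3]
    simp only [mul_add, mul_sub, Finset.sum_add_distrib, Finset.sum_sub_distrib]
    ring
  -- the two total-sum identities
  have hsum1 : ∑ a, ∑ b, ∑ c, q a b c = 1 := by
    rw [show (∑ a, ∑ b, ∑ c, q a b c) = ∑ c, ∑ a, ∑ b, q a b c by
      rw [show (∑ a, ∑ b, ∑ c, q a b c) = ∑ a, ∑ c, ∑ b, q a b c from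
        Finset.sum_congr rfl fun a _ => Finset.sum_comm]
      exact Finset.sum_comm]
    rw [show (∑ c, ∑ a, ∑ b, q a b c) = ∑ c, q3 c from
      Finset.sum_congr rfl fun c _ => (hm3 c).symm]
    rw [hq3d]
    rw [sum_dist' p Z, hp1]
  have hsum2 : ∑ a, ∑ b, ∑ c, q1 a c * q2 b c / q3 c = 1 := by
    rw [show (∑ a, ∑ b, ∑ c, q1 a c * q2 b c / q3 c)
        = ∑ c, ∑ a, ∑ b, q1 a c * q2 b c / q3 c by
      rw [show (∑ a, ∑ b, ∑ c, q1 a c * q2 b c / q3 c)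
          = ∑ a, ∑ c, ∑ b, q1 a c * q2 b c / q3 c from
        Finset.sum_congr rfl fun a _ => Finset.sum_comm]
      exact Finset.sum_comm]
    rw [show (∑ c, ∑ a, ∑ b, q1 a c * q2 b c / q3 c) = ∑ c, q3 c from ?_]
    · rw [hq3d, sum_dist' p Z, hp1]
    refine Finset.sum_congr rfl fun c _ => ?_
    by_cases hc : q3 c = 0
    · have hz1 : ∀ a, q1 a c = 0 := fun a => le_antisymm (hc ▸ hq1q3 a c) (hq1n a c)
      rw [hc]
      exact Finset.sum_eq_zero fun a _ => Finset.sum_eq_zero fun b _ => by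
        rw [hz1 a, zero_mul, zero_div]
    · have e1 : ∀ a, ∑ b, q1 a c * q2 b c / q3 c = q1 a c := by
        intro a
        have e : ∑ b, q1 a c * q2 b c / q3 c = q1 a c / q3 c * ∑ b, q2 b c := by
          rw [Finset.mul_sum]
          exact Finset.sum_congr rfl fun b _ => by ring
        rw [e, hs2 c, div_mul_cancel₀ _ hc]
      rw [Finset.sum_congr rfl fun a _ => e1 a, hs1 c]
  -- the pointwise inequality
  have hl2 : 0 < Real.log 2 := Real.log_pos (by norm_num)
  have hkey : ∀ a b c, (q a b c - q1 a c * q2 b c / q3 c) / Real.log 2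
      ≤ q a b c * (Real.logb 2 (q a b c) + Real.logb 2 (q3 c)
        - Real.logb 2 (q1 a c) - Real.logb 2 (q2 b c)) := by
    intro a b c
    by_cases hq0 : q a b c = 0
    · rw [hq0, zero_mul, zero_sub, neg_div]
      have ht : 0 ≤ q1 a c * q2 b c / q3 c := by
        have := hq1n a c; have := hq2n b c; have := hq3n c; positivity
      exact neg_nonpos.2 (div_nonneg ht hl2.le)
    · have hq0' : 0 < q a b c := lt_of_le_of_ne (hqn a b c) (Ne.symm hq0)
      have hq1' : 0 < q1 a c := lt_of_lt_of_le hq0' (hqq1 a b c)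
      have hq2' : 0 < q2 b c := lt_of_lt_of_le hq0' (hqq2 a b c)
      have hq3' : 0 < q3 c := lt_of_lt_of_le hq1' (hq1q3 a c)
      have hrpos : 0 < q1 a c * q2 b c / (q3 c * q a b c) := by positivity
      have hlog := Real.log_le_sub_one_of_pos hrpos
      have hLr : Real.logb 2 (q a b c) + Real.logb 2 (q3 c)
          - Real.logb 2 (q1 a c) - Real.logb 2 (q2 b c)
          = -(Real.log (q1 a c * q2 b c / (q3 c * q a b c)) / Real.log 2) := by
        rw [Real.log_div (mul_pos hq1' hq2').ne' (mul_pos hq3' hq0').ne',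
          Real.log_mul hq1'.ne' hq2'.ne', Real.log_mul hq3'.ne' hq0'.ne']
        simp only [Real.logb]
        field_simp
        ring
      rw [hLr]
      rw [show q a b c * -(Real.log (q1 a c * q2 b c / (q3 c * q a b c)) / Real.log 2)
          = (-(q a b c * Real.log (q1 a c * q2 b c / (q3 c * q a b c)))) / Real.log 2 by ring]
      have hmul : q a b c * (q1 a c * q2 b c / (q3 c * q a b c))
          = q1 a c * q2 b c / q3 c := by
        field_simp
      have h1 : q a b c * Real.log (q1 a c * q2 b c / (q3 c * q a b c))
          ≤ q a b c * (q1 a c * q2 b c / (q3 c * q a b c) - 1) :=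
        mul_le_mul_of_nonneg_left hlog hq0'.le
      have h2 : q a b c * (q1 a c * q2 b c / (q3 c * q a b c) - 1)
          = q1 a c * q2 b c / q3 c - q a b c := by rw [mul_sub, hmul]; ring
      exact div_le_div_of_nonneg_right (by linarith) hl2.le
  set D : 𝒳 → 𝒴 → γ → ℝ := fun a b c =>
    q a b c * (Real.logb 2 (q a b c) + Real.logb 2 (q3 c)
      - Real.logb 2 (q1 a c) - Real.logb 2 (q2 b c))
    - (q a b c - q1 a c * q2 b c / q3 c) / Real.log 2 with hDd
  have hDn : ∀ a b c, 0 ≤ D a b c := fun a b c => sub_nonneg.2 (hkey a b c)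
  have hDsum : ∑ a, ∑ b, ∑ c, D a b c = 0 := by
    have ht : ∑ a, ∑ b, ∑ c, (q a b c - q1 a c * q2 b c / q3 c) / Real.log 2 = 0 := by
      simp only [sub_div, Finset.sum_sub_distrib, ← Finset.sum_div]
      rw [hsum1, hsum2, sub_self]
    rw [hDd]
    simp only [Finset.sum_sub_distrib]
    rw [← key, h, ht, sub_zero]
  by_contra hq0
  have hqz : q x y z = 0 := le_antisymm (not_lt.1 hq0) (hqn x y z)
  have hq30 : 0 < q3 z := lt_of_lt_of_le h1 (hq1q3 x z)
  have hDpos : 0 < D x y z := by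
    have e : D x y z = q1 x z * q2 y z / q3 z / Real.log 2 := by
      rw [hDd]; dsimp only; rw [hqz]; ring
    rw [e]
    exact div_pos (div_pos (mul_pos h1 h2) hq30) hl2
  have s3 : D x y z ≤ ∑ c, D x y c :=
    Finset.single_le_sum (fun c _ => hDn x y c) (Finset.mem_univ z)
  have s2 : ∑ c, D x y c ≤ ∑ b, ∑ c, D x b c :=
    Finset.single_le_sum (fun b _ => Finset.sum_nonneg fun c _ => hDn x b c)
      (Finset.mem_univ y)
  have s1 : ∑ b, ∑ c, D x b c ≤ ∑ a, ∑ b, ∑ c, D a b c :=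
    Finset.single_le_sum
      (fun a _ => Finset.sum_nonneg fun b _ => Finset.sum_nonneg fun c _ => hDn a b c)
      (Finset.mem_univ x)
  linarith

end Aux7

open Aux7

/-- If `U` is a.s. a function of `X` and also of `Y` (`H(U|X) = H(U|Y) = 0`), and
`g₁(X)`, `g₂(Y)` are sufficient statistics, then `H(U|g₁(X)) = H(U|g₂(Y)) = 0`. -/
theorem stmt7 {Ω 𝒳 𝒴 𝒰 γ₁ γ₂ : Type*} [Fintype Ω] [Fintype 𝒳] [Fintype 𝒴] [Fintype 𝒰]
    [Fintype γ₁] [Fintype γ₂]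
    (p : Ω → ℝ) (hp : IsPMF p) (X : Ω → 𝒳) (Y : Ω → 𝒴) (U : Ω → 𝒰)
    (g₁ : 𝒳 → γ₁) (g₂ : 𝒴 → γ₂)
    (hg₁ : cmi p X Y (fun ω => g₁ (X ω)) = 0)
    (hg₂ : cmi p X Y (fun ω => g₂ (Y ω)) = 0)
    (hUX : condEnt p U X = 0) (hUY : condEnt p U Y = 0) :
    condEnt p U (fun ω => g₁ (X ω)) = 0 ∧ condEnt p U (fun ω => g₂ (Y ω)) = 0 := by
  have hX := (condEnt_eq_zero_iff p hp U X).1 hUX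
  have hY := (condEnt_eq_zero_iff p hp U Y).1 hUY
  constructor
  · rw [condEnt_eq_zero_iff p hp U (fun ω => g₁ (X ω))]
    intro ω ω' hω hω' hzz
    have h1 : 0 < dist' p (fun ω0 => (X ω0, g₁ (X ω0))) (X ω, g₁ (X ω)) :=
      lt_of_lt_of_le hω (le_dist' hp.1 (fun ω0 => (X ω0, g₁ (X ω0))) ω)
    have h2 : 0 < dist' p (fun ω0 => (Y ω0, g₁ (X ω0))) (Y ω', g₁ (X ω)) := by
      rw [hzz]
      exact lt_of_lt_of_le hω' (le_dist' hp.1 (fun ω0 => (Y ω0, g₁ (X ω0))) ω')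
    have h3 := cmi_zero_support p hp X Y (fun ω0 => g₁ (X ω0)) hg₁ h1 h2
    obtain ⟨ω'', hω'', he⟩ := exists_of_dist'_pos hp.1 h3
    simp only [Prod.mk.injEq] at he
    obtain ⟨⟨heX, heY⟩, -⟩ := he
    exact (hX ω'' ω hω'' hω heX).symm.trans (hY ω'' ω' hω'' hω' heY)
  · rw [condEnt_eq_zero_iff p hp U (fun ω => g₂ (Y ω))]
    intro ω ω' hω hω' hzz
    have h1 : 0 < dist' p (fun ω0 => (X ω0, g₂ (Y ω0))) (X ω, g₂ (Y ω)) :=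
      lt_of_lt_of_le hω (le_dist' hp.1 (fun ω0 => (X ω0, g₂ (Y ω0))) ω)
    have h2 : 0 < dist' p (fun ω0 => (Y ω0, g₂ (Y ω0))) (Y ω', g₂ (Y ω)) := by
      rw [hzz]
      exact lt_of_lt_of_le hω' (le_dist' hp.1 (fun ω0 => (Y ω0, g₂ (Y ω0))) ω')
    have h3 := cmi_zero_support p hp X Y (fun ω0 => g₂ (Y ω0)) hg₂ h1 h2
    obtain ⟨ω'', hω'', he⟩ := exists_of_dist'_pos hp.1 h3
    simp only [Prod.mk.injEq] at he
    obtain ⟨⟨heX, heY⟩, -⟩ := he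
    exact (hX ω'' ω hω'' hω heX).symm.trans (hY ω'' ω' hω'' hω' heY)
end
end

section
/- Under the same interactive Markov conditions (U_{2i+1} → (X,U^{2i}) → Y, U_{2i} → (Y,U^{2i-1}) → X, and X → U^r → Y), it holds that Σ_{i odd} I(Y ∧ U_i | U^{i−1}) + Σ_{i even} I(X ∧ U_i | U^{i−1}) = I(X ∧ Y). -/
open scoped Classical
open Finset Real

noncomputable section

variable {Ω : Type*} [Fintype Ω]

/-- The prefix `U^i = (U_1, ..., U_i)` of an interactive sequence. -/
def pre {𝒰 : Type*} {r : ℕ} (U : Fin r → Ω → 𝒰) (i : ℕ) (h : i ≤ r) :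
    Ω → (Fin i → 𝒰) :=
  fun ω k => U (Fin.castLE h k) ω

/-- Condition (P1): interactive Markov conditions.  Index `j : Fin r` corresponds to the
`(j+1)`-st message; messages with odd 1-based index (`Even j.val`) are sent by terminal 𝒳. -/
def P1cond {𝒳 𝒴 𝒰 : Type*} [Fintype 𝒳] [Fintype 𝒴] [Fintype 𝒰] {r : ℕ}
    (p : Ω → ℝ) (X : Ω → 𝒳) (Y : Ω → 𝒴) (U : Fin r → Ω → 𝒰) : Prop :=
  ∀ j : Fin r,
    (Even j.val → cmi p (U j) Y (fun ω => (X ω, pre U j.val j.isLt.le ω)) = 0) ∧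
    (¬ Even j.val → cmi p (U j) X (fun ω => (Y ω, pre U j.val j.isLt.le ω)) = 0)

/-- Condition (P2): `X -∘- U^r -∘- Y`. -/
def P2cond {𝒳 𝒴 𝒰 : Type*} [Fintype 𝒳] [Fintype 𝒴] [Fintype 𝒰] {r : ℕ}
    (p : Ω → ℝ) (X : Ω → 𝒳) (Y : Ω → 𝒴) (U : Fin r → Ω → 𝒰) : Prop :=
  cmi p X Y (pre U r le_rfl) = 0

section aux

variable {α β γ : Type*} [Fintype α] [Fintype β]

lemma dist'_congr (p : Ω → ℝ) (V : Ω → β) (W : Ω → α) (f : α → β)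
    (hf : Function.Injective f) (h : ∀ ω, V ω = f (W ω)) (x : α) :
    dist' p V (f x) = dist' p W x := by
  unfold dist'
  refine Finset.sum_congr rfl fun ω _ => ?_
  simp [h ω, hf.eq_iff]

lemma ent_congr (p : Ω → ℝ) (V : Ω → β) (W : Ω → α) (f : α → β)
    (hf : Function.Injective f) (h : ∀ ω, V ω = f (W ω)) :
    ent p V = ent p W := by
  unfold ent
  congr 1
  have hz : ∀ y : β, y ∉ Finset.univ.image f → dist' p V y = 0 := by
    intro y hy
    refine Finset.sum_eq_zero fun ω _ => ?_
    rw [h ω, if_neg]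
    intro e; exact hy (Finset.mem_image.2 ⟨W ω, Finset.mem_univ _, e⟩)
  calc ∑ y, dist' p V y * Real.logb 2 (dist' p V y)
      = ∑ y ∈ Finset.univ.image f, dist' p V y * Real.logb 2 (dist' p V y) := by
        refine (Finset.sum_subset (Finset.subset_univ _) fun y _ hy => ?_).symm
        rw [hz y hy]; simp
    _ = ∑ x, dist' p V (f x) * Real.logb 2 (dist' p V (f x)) :=
        Finset.sum_image (fun a _ b _ hab => hf hab)
    _ = ∑ x, dist' p W x * Real.logb 2 (dist' p W x) := by
        refine Finset.sum_congr rfl fun x _ => ?_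
        rw [dist'_congr p V W f hf h]

lemma ent_unique [Fintype γ] [Unique γ] (p : Ω → ℝ) (hp : IsPMF p) (Z : Ω → γ) :
    ent p Z = 0 := by
  have hd : dist' p Z default = 1 := by
    unfold dist'
    rw [← hp.2]
    exact Finset.sum_congr rfl fun ω _ => by rw [if_pos (Subsingleton.elim _ _)]
  unfold ent
  rw [Finset.univ_unique, Finset.sum_singleton, hd]
  simp

lemma cmi_unique {𝒳 𝒴 : Type*} [Fintype 𝒳] [Fintype 𝒴] [Fintype γ] [Unique γ]
    (p : Ω → ℝ) (hp : IsPMF p) (X : Ω → 𝒳) (Y : Ω → 𝒴) (Z : Ω → γ) :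
    cmi p X Y Z = mi p X Y := by
  have e1 : ent p (fun ω => (X ω, Z ω)) = ent p X :=
    ent_congr p _ X (fun x => (x, default)) (fun a b h => congrArg Prod.fst h)
      (fun ω => by rw [Subsingleton.elim (Z ω) default])
  have e2 : ent p (fun ω => (Y ω, Z ω)) = ent p Y :=
    ent_congr p _ Y (fun x => (x, default)) (fun a b h => congrArg Prod.fst h)
      (fun ω => by rw [Subsingleton.elim (Z ω) default])
  have e3 : ent p (fun ω => ((X ω, Y ω), Z ω)) = ent p (fun ω => (X ω, Y ω)) :=
    ent_congr p _ _ (fun x => (x, default)) (fun a b h => congrArg Prod.fst h)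
      (fun ω => by rw [Subsingleton.elim (Z ω) default])
  unfold cmi mi
  rw [e1, e2, e3, ent_unique p hp Z]
  ring

lemma key_even {𝒳 𝒴 𝒰 γ δ : Type*} [Fintype 𝒳] [Fintype 𝒴] [Fintype 𝒰] [Fintype γ]
    [Fintype δ] (p : Ω → ℝ) (X : Ω → 𝒳) (Y : Ω → 𝒴) (B : Ω → 𝒰) (Z : Ω → γ) (Z' : Ω → δ)
    (f : γ × 𝒰 → δ) (hf : Function.Injective f) (hZ' : ∀ ω, Z' ω = f (Z ω, B ω))
    (hmar : cmi p B Y (fun ω => (X ω, Z ω)) = 0) :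
    cmi p X Y Z = cmi p Y B Z + cmi p X Y Z' := by
  have r1 : ent p Z' = ent p (fun ω => (B ω, Z ω)) := by
    refine ent_congr p _ _ (fun q : 𝒰 × γ => f (q.2, q.1)) ?_ (fun ω => by rw [hZ' ω])
    rintro ⟨b, z⟩ ⟨b', z'⟩ hq
    have := hf hq
    simp only [Prod.mk.injEq] at this ⊢
    tauto
  have r2 : ent p (fun ω => (X ω, Z' ω)) = ent p (fun ω => (B ω, (X ω, Z ω))) := by
    refine ent_congr p _ _ (fun q : 𝒰 × (𝒳 × γ) => (q.2.1, f (q.2.2, q.1))) ?_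
      (fun ω => by rw [hZ' ω])
    rintro ⟨b, x, z⟩ ⟨b', x', z'⟩ hq
    simp only [Prod.mk.injEq] at hq ⊢
    have := hf hq.2
    simp only [Prod.mk.injEq] at this
    tauto
  have r3 : ent p (fun ω => (Y ω, Z' ω)) = ent p (fun ω => ((Y ω, B ω), Z ω)) := by
    refine ent_congr p _ _ (fun q : (𝒴 × 𝒰) × γ => (q.1.1, f (q.2, q.1.2))) ?_
      (fun ω => by rw [hZ' ω])
    rintro ⟨⟨y, b⟩, z⟩ ⟨⟨y', b'⟩, z'⟩ hq
    simp only [Prod.mk.injEq] at hq ⊢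
    have := hf hq.2
    simp only [Prod.mk.injEq] at this
    tauto
  have r4 : ent p (fun ω => ((X ω, Y ω), Z' ω))
      = ent p (fun ω => ((B ω, Y ω), (X ω, Z ω))) := by
    refine ent_congr p _ _
      (fun q : (𝒰 × 𝒴) × (𝒳 × γ) => ((q.2.1, q.1.2), f (q.2.2, q.1.1))) ?_
      (fun ω => by rw [hZ' ω])
    rintro ⟨⟨b, y⟩, x, z⟩ ⟨⟨b', y'⟩, x', z'⟩ hq
    simp only [Prod.mk.injEq] at hq ⊢
    have := hf hq.2
    simp only [Prod.mk.injEq] at this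
    tauto
  have r5 : ent p (fun ω => ((X ω, Y ω), Z ω)) = ent p (fun ω => (Y ω, (X ω, Z ω))) := by
    refine ent_congr p _ _ (fun q : 𝒴 × (𝒳 × γ) => ((q.2.1, q.1), q.2.2)) ?_
      (fun ω => rfl)
    rintro ⟨y, x, z⟩ ⟨y', x', z'⟩ hq
    simp only [Prod.mk.injEq] at hq ⊢
    tauto
  unfold cmi at hmar ⊢
  simp only at hmar
  rw [r1, r2, r3, r4, r5]
  linarith [hmar]

lemma key_odd {𝒳 𝒴 𝒰 γ δ : Type*} [Fintype 𝒳] [Fintype 𝒴] [Fintype 𝒰] [Fintype γ]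
    [Fintype δ] (p : Ω → ℝ) (X : Ω → 𝒳) (Y : Ω → 𝒴) (B : Ω → 𝒰) (Z : Ω → γ) (Z' : Ω → δ)
    (f : γ × 𝒰 → δ) (hf : Function.Injective f) (hZ' : ∀ ω, Z' ω = f (Z ω, B ω))
    (hmar : cmi p B X (fun ω => (Y ω, Z ω)) = 0) :
    cmi p X Y Z = cmi p X B Z + cmi p X Y Z' := by
  have r1 : ent p Z' = ent p (fun ω => (B ω, Z ω)) := by
    refine ent_congr p _ _ (fun q : 𝒰 × γ => f (q.2, q.1)) ?_ (fun ω => by rw [hZ' ω])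
    rintro ⟨b, z⟩ ⟨b', z'⟩ hq
    have := hf hq
    simp only [Prod.mk.injEq] at this ⊢
    tauto
  have r2 : ent p (fun ω => (X ω, Z' ω)) = ent p (fun ω => ((X ω, B ω), Z ω)) := by
    refine ent_congr p _ _ (fun q : (𝒳 × 𝒰) × γ => (q.1.1, f (q.2, q.1.2))) ?_
      (fun ω => by rw [hZ' ω])
    rintro ⟨⟨x, b⟩, z⟩ ⟨⟨x', b'⟩, z'⟩ hq
    simp only [Prod.mk.injEq] at hq ⊢
    have := hf hq.2
    simp only [Prod.mk.injEq] at this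
    tauto
  have r3 : ent p (fun ω => (Y ω, Z' ω)) = ent p (fun ω => (B ω, (Y ω, Z ω))) := by
    refine ent_congr p _ _ (fun q : 𝒰 × (𝒴 × γ) => (q.2.1, f (q.2.2, q.1))) ?_
      (fun ω => by rw [hZ' ω])
    rintro ⟨b, y, z⟩ ⟨b', y', z'⟩ hq
    simp only [Prod.mk.injEq] at hq ⊢
    have := hf hq.2
    simp only [Prod.mk.injEq] at this
    tauto
  have r4 : ent p (fun ω => ((X ω, Y ω), Z' ω))
      = ent p (fun ω => ((B ω, X ω), (Y ω, Z ω))) := by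
    refine ent_congr p _ _
      (fun q : (𝒰 × 𝒳) × (𝒴 × γ) => ((q.1.2, q.2.1), f (q.2.2, q.1.1))) ?_
      (fun ω => by rw [hZ' ω])
    rintro ⟨⟨b, x⟩, y, z⟩ ⟨⟨b', x'⟩, y', z'⟩ hq
    simp only [Prod.mk.injEq] at hq ⊢
    have := hf hq.2
    simp only [Prod.mk.injEq] at this
    tauto
  have r5 : ent p (fun ω => ((X ω, Y ω), Z ω)) = ent p (fun ω => (X ω, (Y ω, Z ω))) := by
    refine ent_congr p _ _ (fun q : 𝒳 × (𝒴 × γ) => ((q.1, q.2.1), q.2.2)) ?_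
      (fun ω => rfl)
    rintro ⟨x, y, z⟩ ⟨x', y', z'⟩ hq
    simp only [Prod.mk.injEq] at hq ⊢
    tauto
  unfold cmi at hmar ⊢
  simp only at hmar
  rw [r1, r2, r3, r4, r5]
  linarith [hmar]

lemma snoc_inj {𝒰 : Type*} (n : ℕ) :
    Function.Injective (fun q : (Fin n → 𝒰) × 𝒰 => (Fin.snoc q.1 q.2 : Fin (n+1) → 𝒰)) := by
  rintro ⟨g, a⟩ ⟨g', a'⟩ h
  simp only at h
  have h1 : a = a' := by
    have := congrFun h (Fin.last n); simpa using this
  have h2 : g = g' := funext fun k => by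
    have := congrFun h k.castSucc; simpa using this
  simp [h1, h2]

lemma pre_succ {𝒰 : Type*} {r n : ℕ} (U : Fin r → Ω → 𝒰) (h : n + 1 ≤ r) (ω : Ω) :
    pre U (n+1) h ω
      = Fin.snoc (pre U n (Nat.le_of_succ_le h) ω) (U ⟨n, Nat.lt_of_succ_le h⟩ ω) := by
  funext k
  refine Fin.lastCases ?_ ?_ k
  · rw [Fin.snoc_last]
    exact congrFun (congrArg U (by ext; simp)) ω
  · intro i
    rw [Fin.snoc_castSucc]
    exact congrFun (congrArg U (by ext; simp)) ω

end aux

lemma main_aux {𝒳 𝒴 𝒰 : Type*} [Fintype 𝒳] [Fintype 𝒴] [Fintype 𝒰] {r : ℕ}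
    (p : Ω → ℝ) (hp : IsPMF p) (X : Ω → 𝒳) (Y : Ω → 𝒴) (U : Fin r → Ω → 𝒰)
    (h1 : P1cond p X Y U) :
    ∀ n (hn : n ≤ r),
      (∑ j ∈ Finset.range n, if h : j < r then
          (if Even j then cmi p Y (U ⟨j, h⟩) (pre U j h.le)
           else cmi p X (U ⟨j, h⟩) (pre U j h.le))
        else 0)
      = mi p X Y - cmi p X Y (pre U n hn) := by
  intro n
  induction n with
  | zero =>
      intro hn
      rw [Finset.sum_range_zero, cmi_unique p hp X Y (pre U 0 hn)]
      ring
  | succ n ih =>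
      intro hn
      have hn' : n < r := Nat.lt_of_succ_le hn
      rw [Finset.sum_range_succ, ih (Nat.le_of_succ_le hn), dif_pos hn']
      by_cases he : Even n
      · rw [if_pos he]
        have hmar : cmi p (U ⟨n, hn'⟩) Y (fun ω => (X ω, pre U n hn'.le ω)) = 0 :=
          (h1 ⟨n, hn'⟩).1 he
        have := key_even p X Y (U ⟨n, hn'⟩) (pre U n hn'.le) (pre U (n+1) hn)
          (fun q => Fin.snoc q.1 q.2) (snoc_inj n) (fun ω => pre_succ U hn ω) hmar
        linarith [this]
      · rw [if_neg he]
        have hmar : cmi p (U ⟨n, hn'⟩) X (fun ω => (Y ω, pre U n hn'.le ω)) = 0 :=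
          (h1 ⟨n, hn'⟩).2 he
        have := key_odd p X Y (U ⟨n, hn'⟩) (pre U n hn'.le) (pre U (n+1) hn)
          (fun q => Fin.snoc q.1 q.2) (snoc_inj n) (fun ω => pre_succ U hn ω) hmar
        linarith [this]

/-- Under the interactive Markov conditions,
`Σ_{i odd} I(Y ∧ U_i | U^{i-1}) + Σ_{i even} I(X ∧ U_i | U^{i-1}) = I(X ∧ Y)`. -/
theorem stmt12 {Ω 𝒳 𝒴 𝒰 : Type*} [Fintype Ω] [Fintype 𝒳] [Fintype 𝒴] [Fintype 𝒰] {r : ℕ}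
    (p : Ω → ℝ) (hp : IsPMF p) (X : Ω → 𝒳) (Y : Ω → 𝒴) (U : Fin r → Ω → 𝒰)
    (h1 : P1cond p X Y U) (h2 : P2cond p X Y U) :
    (∑ j : Fin r,
        if Even j.val
        then cmi p Y (U j) (pre U j.val j.isLt.le)
        else cmi p X (U j) (pre U j.val j.isLt.le))
      = mi p X Y := by
  have haux := main_aux p hp X Y U h1 r le_rfl
  rw [h2] at haux
  have key : ∀ j : Fin r,
      (if Even j.val
        then cmi p Y (U j) (pre U j.val j.isLt.le)
        else cmi p X (U j) (pre U j.val j.isLt.le))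
      = (fun m => if h : m < r then
          (if Even m then cmi p Y (U ⟨m, h⟩) (pre U m h.le)
           else cmi p X (U ⟨m, h⟩) (pre U m h.le))
        else 0) j.val := by
    intro j
    simp only [dif_pos j.isLt, Fin.eta]
  rw [Finset.sum_congr rfl (fun j _ => key j),
    Fin.sum_univ_eq_sum_range (fun m => if h : m < r then
          (if Even m then cmi p Y (U ⟨m, h⟩) (pre U m h.le)
           else cmi p X (U ⟨m, h⟩) (pre U m h.le))
        else 0) r]
  linarith [haux]
end
end
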